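/- Let r ≥ 1, n ≥ 1. For every nonempty subset S = {i_1 < i_2 < ⋯ < i_s} of {1,…,r} with s ≤ n, let x_S = t_{i_1}^{n−s+1} t_{i_2} ⋯ t_{i_s} ∈ F_2[t_1,…,t_r]. Then every homogeneous polynomial f ∈ F_2[t_1,…,t_r] of degree n is congruent modulo the ideal J_r to an F_2-linear combination of the monomials x_S, S ranging over the nonempty subsets of {1,…,r} of cardinality at most n. -/
import Mathlib


open MvPolynomial

/-- `J r` is the ideal of `F₂[t 1, …, t r]` generated by the elements
`t i ^ 2 * t j + t i * t j ^ 2` for `1 ≤ i, j ≤ r`. -/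
noncomputable def J (r : ℕ) : Ideal (MvPolynomial (Fin r) (ZMod 2)) :=
  Ideal.span {p | ∃ i j : Fin r, p = X i ^ 2 * X j + X i * X j ^ 2}

/-- For a nonempty subset `S = {i₁ < i₂ < ⋯ < i_s}` of `{1,…,r}`, `xS r n S` is the degree-`n`
monomial `t i₁ ^ (n - s + 1) * t i₂ * ⋯ * t i_s` (and `0` if `S` is empty). -/
noncomputable def xS (r n : ℕ) (S : Finset (Fin r)) : MvPolynomial (Fin r) (ZMod 2) :=
  if h : S.Nonempty then (∏ i ∈ S, X i) * X (S.min' h) ^ (n - S.card) else 0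

lemma key (r : ℕ) (c : Fin r →₀ ℕ) (i i₀ : Fin r) :
    Ideal.Quotient.mk (J r) (monomial (c + (Finsupp.single i 2 + Finsupp.single i₀ 1)) (1 : ZMod 2)) =
    Ideal.Quotient.mk (J r) (monomial (c + (Finsupp.single i 1 + Finsupp.single i₀ 2)) 1) := by
  rw [Ideal.Quotient.eq, CharTwo.sub_eq_add]
  have hmem : (X i ^ 2 * X i₀ + X i * X i₀ ^ 2 : MvPolynomial (Fin r) (ZMod 2)) ∈ J r :=
    Ideal.subset_span ⟨i, i₀, rfl⟩
  have : (monomial (c + (Finsupp.single i 2 + Finsupp.single i₀ 1)) (1 : ZMod 2)) +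
      monomial (c + (Finsupp.single i 1 + Finsupp.single i₀ 2)) 1 =
      monomial c 1 * (X i ^ 2 * X i₀ + X i * X i₀ ^ 2) := by
    rw [mul_add]
    rw [X_pow_eq_monomial, X_pow_eq_monomial, X, X]
    simp [monomial_mul, add_assoc]
  rw [this]
  exact Ideal.mul_mem_left _ _ hmem

lemma step (r : ℕ) (d : Fin r →₀ ℕ) (i i₀ : Fin r) (hii₀ : i ≠ i₀)
    (hdi : 2 ≤ d i) (hdi₀ : 1 ≤ d i₀) :
    ∃ d' : Fin r →₀ ℕ,
      Ideal.Quotient.mk (J r) (monomial d 1) = Ideal.Quotient.mk (J r) (monomial d' (1 : ZMod 2)) ∧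
      ∀ a, d' a = if a = i then d a - 1 else if a = i₀ then d a + 1 else d a := by
  have hle : Finsupp.single i 2 + Finsupp.single i₀ 1 ≤ d := by
    rw [Finsupp.le_def]
    intro a
    rw [Finsupp.add_apply, Finsupp.single_apply, Finsupp.single_apply]
    by_cases hai : i = a
    · rw [if_pos hai, if_neg (fun hh : i₀ = a => hii₀ (hai.trans hh.symm)), ← hai]
      omega
    · rw [if_neg hai]
      by_cases hai₀ : i₀ = a
      · rw [if_pos hai₀, ← hai₀]
        omega
      · rw [if_neg hai₀]
        omega
  have hceq : (d - (Finsupp.single i 2 + Finsupp.single i₀ 1)) +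
      (Finsupp.single i 2 + Finsupp.single i₀ 1) = d := tsub_add_cancel_of_le hle
  refine ⟨(d - (Finsupp.single i 2 + Finsupp.single i₀ 1)) +
      (Finsupp.single i 1 + Finsupp.single i₀ 2), ?_, ?_⟩
  · conv_lhs => rw [← hceq]
    exact key r _ i i₀
  · intro a
    have hc : (d - (Finsupp.single i 2 + Finsupp.single i₀ 1) : Fin r →₀ ℕ) a =
        d a - ((Finsupp.single i 2 + Finsupp.single i₀ 1 : Fin r →₀ ℕ) a) :=
      Finsupp.tsub_apply d _ a
    rw [Finsupp.add_apply, hc, Finsupp.add_apply, Finsupp.add_apply,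
      Finsupp.single_apply, Finsupp.single_apply, Finsupp.single_apply, Finsupp.single_apply]
    by_cases hai : a = i
    · subst hai
      rw [if_pos rfl, if_pos rfl, if_neg (Ne.symm hii₀), if_neg (Ne.symm hii₀), if_pos rfl]
      omega
    · rw [if_neg (fun hh : i = a => hai hh.symm), if_neg (fun hh : i = a => hai hh.symm),
        if_neg hai]
      by_cases hai₀ : a = i₀
      · subst hai₀
        rw [if_pos rfl, if_pos rfl, if_pos rfl]
        omega
      · rw [if_neg (fun hh : i₀ = a => hai₀ hh.symm), if_neg (fun hh : i₀ = a => hai₀ hh.symm),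
          if_neg hai₀]
        omega

lemma main_lemma (r n : ℕ) (k : ℕ) : ∀ (d : Fin r →₀ ℕ) (h : d.support.Nonempty),
    (∑ a ∈ d.support, d a) = n →
    (∑ a ∈ d.support.erase (d.support.min' h), (d a - 1)) = k →
    Ideal.Quotient.mk (J r) (monomial d 1) = Ideal.Quotient.mk (J r) (xS r n d.support) := by
  induction k with
  | zero =>
    intro d h hsum hk
    have hi₀mem : d.support.min' h ∈ d.support := Finset.min'_mem _ _
    have hone : ∀ a ∈ d.support.erase (d.support.min' h), d a = 1 := by
      intro a ha
      have h1 : d a ≠ 0 := Finsupp.mem_support_iff.mp (Finset.mem_of_mem_erase ha)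
      have h2 := Finset.sum_eq_zero_iff.mp hk a ha
      omega
    have hcard : 1 ≤ d.support.card := Finset.card_pos.mpr h
    have hsplit : ∑ a ∈ d.support, d a =
        d (d.support.min' h) + ∑ a ∈ d.support.erase (d.support.min' h), d a :=
      (Finset.add_sum_erase _ _ hi₀mem).symm
    have herase : ∑ a ∈ d.support.erase (d.support.min' h), d a = d.support.card - 1 := by
      rw [Finset.sum_congr rfl hone, Finset.sum_const, smul_eq_mul, mul_one,
        Finset.card_erase_of_mem hi₀mem]
    have hd0 : d (d.support.min' h) = n - d.support.card + 1 := by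
      have h1 : d (d.support.min' h) ≠ 0 := Finsupp.mem_support_iff.mp hi₀mem
      omega
    rw [xS, dif_pos h]
    congr 1
    rw [← prod_X_pow_eq_monomial]
    rw [← Finset.mul_prod_erase _ _ hi₀mem, ← Finset.mul_prod_erase _ X hi₀mem]
    rw [Finset.prod_congr rfl (fun a ha => by rw [hone a ha, pow_one]), hd0, pow_succ]
    ring
  | succ k ih =>
    intro d h hsum hk
    have hi₀mem : d.support.min' h ∈ d.support := Finset.min'_mem _ _
    have hd0 : 1 ≤ d (d.support.min' h) :=
      Nat.one_le_iff_ne_zero.mpr (Finsupp.mem_support_iff.mp hi₀mem)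
    obtain ⟨i, hiE, hine⟩ := Finset.exists_ne_zero_of_sum_ne_zero
      (show (∑ a ∈ d.support.erase (d.support.min' h), (d a - 1)) ≠ 0 by omega)
    have hii₀ : i ≠ d.support.min' h := Finset.ne_of_mem_erase hiE
    have hiS : i ∈ d.support := Finset.mem_of_mem_erase hiE
    have hdi : 2 ≤ d i := by
      have : d i ≠ 0 := Finsupp.mem_support_iff.mp hiS
      omega
    obtain ⟨d', hQ, hval⟩ := step r d i (d.support.min' h) hii₀ hdi hd0
    have hv1 : d' i = d i - 1 := by rw [hval i, if_pos rfl]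
    have hv2 : d' (d.support.min' h) = d (d.support.min' h) + 1 := by
      rw [hval _, if_neg (Ne.symm hii₀), if_pos rfl]
    have hsupp : d'.support = d.support := by
      ext a
      simp only [Finsupp.mem_support_iff]
      rw [hval a]
      split_ifs with h1 h2
      · subst h1; omega
      · subst h2; omega
      · tauto
    have h' : d'.support.Nonempty := by rw [hsupp]; exact h
    have hmin : d'.support.min' h' = d.support.min' h := by
      apply le_antisymm
      · exact Finset.min'_le _ _ (by rw [hsupp]; exact hi₀mem)
      · exact Finset.min'_le _ _
          (Finset.mem_of_subset (le_of_eq hsupp) (Finset.min'_mem d'.support h'))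
    have hi₀E : d.support.min' h ∈ d.support.erase i :=
      Finset.mem_erase.mpr ⟨Ne.symm hii₀, hi₀mem⟩
    have hrest : ∑ a ∈ (d.support.erase i).erase (d.support.min' h), d' a =
        ∑ a ∈ (d.support.erase i).erase (d.support.min' h), d a := by
      apply Finset.sum_congr rfl
      intro a ha
      rw [hval a, if_neg (Finset.ne_of_mem_erase (Finset.mem_of_mem_erase ha)),
        if_neg (Finset.ne_of_mem_erase ha)]
    have hsum' : (∑ a ∈ d'.support, d' a) = n := by
      rw [hsupp]
      rw [← Finset.add_sum_erase _ d' hiS, ← Finset.add_sum_erase _ d' hi₀E]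
      rw [← Finset.add_sum_erase _ d hiS, ← Finset.add_sum_erase _ d hi₀E] at hsum
      omega
    have hmeas : (∑ a ∈ d'.support.erase (d'.support.min' h'), (d' a - 1)) = k := by
      rw [hmin, hsupp]
      rw [← Finset.add_sum_erase _ (fun a => d' a - 1) hiE]
      rw [← Finset.add_sum_erase _ (fun a => d a - 1) hiE] at hk
      have hrest2 : ∑ a ∈ (d.support.erase (d.support.min' h)).erase i, (d' a - 1) =
          ∑ a ∈ (d.support.erase (d.support.min' h)).erase i, (d a - 1) := by
        apply Finset.sum_congr rfl
        intro a ha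
        rw [hval a, if_neg (Finset.ne_of_mem_erase ha),
          if_neg (Finset.ne_of_mem_erase (Finset.mem_of_mem_erase ha))]
      omega
    rw [hQ, ih d' h' hsum' hmeas, hsupp]

/-- Every homogeneous polynomial of degree `n` in `F₂[t 1, …, t r]` is congruent, modulo the
ideal `J r`, to an `F₂`-linear combination of the monomials `xS r n S`, where `S` ranges over
the nonempty subsets of `{1,…,r}` of cardinality at most `n`. -/
theorem stmt_10 (r n : ℕ) (hr : 1 ≤ r) (hn : 1 ≤ n)
    (f : MvPolynomial (Fin r) (ZMod 2)) (hf : f.IsHomogeneous n) :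
    ∃ lam : Finset (Fin r) → ZMod 2,
      f - ∑ S ∈ Finset.univ.filter (fun S : Finset (Fin r) => S.Nonempty ∧ S.card ≤ n),
        lam S • xS r n S ∈ J r := by
  classical
  refine ⟨fun S => ∑ d ∈ f.support.filter (fun d => d.support = S), coeff d f, ?_⟩
  apply Ideal.Quotient.eq.mp
  have hdeg : ∀ d ∈ f.support, (∑ a ∈ d.support, d a) = n := by
    intro d hd
    have h1 := hf (MvPolynomial.mem_support_iff.mp hd)
    rw [Finsupp.weight_apply, Finsupp.sum] at h1
    simpa using h1
  have hne : ∀ d ∈ f.support, d.support.Nonempty := by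
    intro d hd
    rw [Finset.nonempty_iff_ne_empty]
    intro hemp
    have := hdeg d hd
    rw [hemp] at this
    simp at this
    omega
  have hcard : ∀ d ∈ f.support, d.support.card ≤ n := by
    intro d hd
    have h2 := Finset.card_nsmul_le_sum d.support d 1
      (fun x hx => Nat.one_le_iff_ne_zero.mpr (Finsupp.mem_support_iff.mp hx))
    have := hdeg d hd
    simp only [smul_eq_mul, mul_one] at h2
    have h3 : d.support.sum ⇑d = ∑ a ∈ d.support, d a := rfl
    omega
  have hmon : ∀ d ∈ f.support,
      Ideal.Quotient.mk (J r) (monomial d (coeff d f)) =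
      Ideal.Quotient.mk (J r) (C (coeff d f) * xS r n d.support) := by
    intro d hd
    have h1 := main_lemma r n (∑ a ∈ d.support.erase (d.support.min' (hne d hd)), (d a - 1))
      d (hne d hd) (hdeg d hd) rfl
    rw [show monomial d (coeff d f) = C (coeff d f) * monomial d 1 by
      rw [C_mul_monomial, mul_one]]
    rw [map_mul, h1, ← map_mul]
  conv_lhs => rw [f.as_sum]
  rw [map_sum, Finset.sum_congr rfl hmon]
  rw [← Finset.sum_fiberwise_of_maps_to (g := fun d => d.support)
    (t := Finset.univ.filter (fun S : Finset (Fin r) => S.Nonempty ∧ S.card ≤ n))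
    (fun d hd => Finset.mem_filter.mpr ⟨Finset.mem_univ _, hne d hd, hcard d hd⟩)]
  rw [map_sum]
  apply Finset.sum_congr rfl
  intro S hS
  have hfiber : ∀ d ∈ f.support.filter (fun d => d.support = S),
      Ideal.Quotient.mk (J r) (C (coeff d f) * xS r n d.support) =
      Ideal.Quotient.mk (J r) (C (coeff d f) * xS r n S) := by
    intro d hd
    rw [(Finset.mem_filter.mp hd).2]
  rw [Finset.sum_congr rfl hfiber, ← map_sum, ← Finset.sum_mul, ← map_sum C,
    smul_eq_C_mul]
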